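/- Let H be a Hermitian operator on a finite-dimensional complex Hilbert space, let A, B be operators on this space, let β > 0, and suppose there exist constants b, v > 0, K ≥ 0 and d ≥ 0 such that ‖[τ^H_s(A), B]‖ ≤ K·(e^{b v |s|} − 1)·e^{−b d} for all s ∈ ℝ. Then for every T > 0: ‖[I_{H,β}(A), B]‖ ≤ (2βK/(√π b² v²))·e^{b(vT − d)} + (2/(√π β))·‖A‖·‖B‖·e^{−β² T²}. -/

import Mathlib

open MeasureTheory Real

/-- The Heisenberg time evolution `τ^H_s(A) = e^{isH} A e^{-isH}`. -/
noncomputable def heis {V : Type*} [NormedAddCommGroup V] [NormedSpace ℂ V]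
    (H : V →L[ℂ] V) (s : ℝ) (A : V →L[ℂ] V) : V →L[ℂ] V :=
  NormedSpace.exp ((Complex.I * (s : ℂ)) • H) * A *
    NormedSpace.exp ((-(Complex.I * (s : ℂ))) • H)

/-- The Gaussian filter `φ_β(t) = (β/√π) e^{-β²t²}`. -/
noncomputable def phi (β t : ℝ) : ℝ := (β / Real.sqrt π) * Real.exp (-(β ^ 2 * t ^ 2))

/-- The almost inverse Liouvillian `I_{H,β}(A) = ∫ φ_β(t) (∫_0^t τ^H_s(A) ds) dt`. -/
noncomputable def aiL {V : Type*} [NormedAddCommGroup V] [NormedSpace ℂ V]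
    (H : V →L[ℂ] V) (β : ℝ) (A : V →L[ℂ] V) : V →L[ℂ] V :=
  ∫ t : ℝ, phi β t • (∫ s in (0:ℝ)..t, heis H s A)

set_option maxHeartbeats 2000000
set_option synthInstance.maxHeartbeats 400000

section aux
variable {V : Type*} [NormedAddCommGroup V] [InnerProductSpace ℂ V] [FiniteDimensional ℂ V]

lemma norm_exp_I_smul [Nontrivial V] (H : V →L[ℂ] V) (hH : IsSelfAdjoint H) (c : ℝ) :
    ‖NormedSpace.exp ((Complex.I * (c : ℂ)) • H)‖ = 1 := by
  have h1 : IsSelfAdjoint ((c : ℂ) • H) := by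
    rw [IsSelfAdjoint, star_smul, hH.star_eq, Complex.star_def, Complex.conj_ofReal]
  rw [mul_smul]
  have := CStarRing.norm_coe_unitary
    (selfAdjoint.expUnitary (⟨(c : ℂ) • H, h1⟩ : selfAdjoint (V →L[ℂ] V)))
  rwa [selfAdjoint.expUnitary_coe] at this

lemma norm_heis_le (H : V →L[ℂ] V) (hH : IsSelfAdjoint H) (s : ℝ) (A : V →L[ℂ] V) :
    ‖heis H s A‖ ≤ ‖A‖ := by
  rcases subsingleton_or_nontrivial V with h | h
  · simp [Subsingleton.elim (heis H s A) 0, norm_nonneg]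
  · have h2 : (-(Complex.I * (s:ℂ))) • H = (Complex.I * ((-s : ℝ) : ℂ)) • H := by
      push_cast; ring_nf
    calc ‖heis H s A‖ ≤ ‖NormedSpace.exp ((Complex.I * (s : ℂ)) • H) * A‖ *
          ‖NormedSpace.exp ((-(Complex.I * (s : ℂ))) • H)‖ := norm_mul_le _ _
      _ ≤ ‖NormedSpace.exp ((Complex.I * (s : ℂ)) • H)‖ * ‖A‖ *
          ‖NormedSpace.exp ((-(Complex.I * (s : ℂ))) • H)‖ := by
          gcongr; exact norm_mul_le _ _
      _ = ‖A‖ := by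
          rw [h2, norm_exp_I_smul H hH, norm_exp_I_smul H hH, one_mul, mul_one]

lemma continuous_heis (H : V →L[ℂ] V) (A : V →L[ℂ] V) :
    Continuous fun s : ℝ => heis H s A := by
  unfold heis
  let +nondep : NormedAlgebra ℚ (V →L[ℂ] V) := .restrictScalars ℚ ℂ (V →L[ℂ] V)
  have h : Continuous (NormedSpace.exp : (V →L[ℂ] V) → (V →L[ℂ] V)) :=
    NormedSpace.exp_continuous
  fun_prop

end aux

lemma integral_exp_sub_one {c : ℝ} (hc : c ≠ 0) (a r : ℝ) :
    ∫ s in a..r, (Real.exp (c * s) - 1) =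
      (Real.exp (c * r) / c - r) - (Real.exp (c * a) / c - a) := by
  have hder : ∀ x ∈ Set.uIcc a r,
      HasDerivAt (fun y => Real.exp (c * y) / c - y) (Real.exp (c * x) - 1) x := by
    intro x _
    have h1 : HasDerivAt (fun y : ℝ => c * y) c x := by
      simpa using (hasDerivAt_id x).const_mul c
    have h2 := (h1.exp).div_const c
    have h3 := h2.fun_sub (hasDerivAt_id x)
    simpa [mul_comm, mul_div_cancel_left₀ _ hc] using h3
  have hint : IntervalIntegrable (fun s => Real.exp (c * s) - 1) volume a r :=
    (Continuous.sub (Real.continuous_exp.comp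
      (continuous_const.mul continuous_id)) continuous_const).intervalIntegrable _ _
  exact intervalIntegral.integral_eq_sub_of_hasDerivAt hder hint

lemma key_bound {W : Type*} [NormedAddCommGroup W] [NormedSpace ℝ W]
    {C : ℝ → W} (hC : Continuous C) {M c : ℝ} (hc : 0 < c) (hM : 0 ≤ M)
    (hbound : ∀ s, ‖C s‖ ≤ M * (Real.exp (c * |s|) - 1)) (t : ℝ) :
    ‖∫ s in (0:ℝ)..t, C s‖ ≤ M / c * (Real.exp (c * |t|) - 1) := by
  have hintN : ∀ x y : ℝ, IntervalIntegrable (fun s => ‖C s‖) volume x y := fun x y =>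
    hC.norm.intervalIntegrable _ _
  rcases le_total 0 t with h | h
  · have habs : |t| = t := abs_of_nonneg h
    calc ‖∫ s in (0:ℝ)..t, C s‖ ≤ ∫ s in (0:ℝ)..t, ‖C s‖ :=
          intervalIntegral.norm_integral_le_integral_norm h
      _ ≤ ∫ s in (0:ℝ)..t, M * (Real.exp (c * s) - 1) := by
          apply intervalIntegral.integral_mono_on h (hintN _ _)
          · exact ((continuous_const.mul ((Real.continuous_exp.comp
              (continuous_const.mul continuous_id)).sub continuous_const))).intervalIntegrable _ _
          · intro s hs
            have := hbound s
            rwa [abs_of_nonneg hs.1] at this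
      _ = M * ((Real.exp (c * t) - 1) / c - t) := by
          rw [intervalIntegral.integral_const_mul, integral_exp_sub_one hc.ne']
          simp only [mul_zero, Real.exp_zero]
          ring
      _ ≤ M / c * (Real.exp (c * |t|) - 1) := by
          rw [habs]
          rw [div_mul_eq_mul_div, mul_div_assoc]
          have : (Real.exp (c * t) - 1) / c - t ≤ (Real.exp (c * t) - 1) / c := by
            linarith
          nlinarith [mul_le_mul_of_nonneg_left this hM]
  · have habs : |t| = -t := abs_of_nonpos h
    rw [intervalIntegral.integral_symm, norm_neg]
    calc ‖∫ s in t..(0:ℝ), C s‖ ≤ ∫ s in t..(0:ℝ), ‖C s‖ :=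
          intervalIntegral.norm_integral_le_integral_norm h
      _ ≤ ∫ s in t..(0:ℝ), M * (Real.exp (c * (-s)) - 1) := by
          apply intervalIntegral.integral_mono_on h (hintN _ _)
          · exact ((continuous_const.mul ((Real.continuous_exp.comp
              (continuous_const.mul continuous_id.neg)).sub continuous_const))).intervalIntegrable _ _
          · intro s hs
            have := hbound s
            rwa [abs_of_nonpos hs.2] at this
      _ = ∫ s in (0:ℝ)..(-t), M * (Real.exp (c * s) - 1) := by
          rw [show (0:ℝ) = -0 by norm_num, ← intervalIntegral.integral_comp_neg
            (fun s => M * (Real.exp (c * s) - 1))]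
          norm_num
      _ = M * ((Real.exp (c * (-t)) - 1) / c - (-t)) := by
          rw [intervalIntegral.integral_const_mul, integral_exp_sub_one hc.ne']
          simp only [mul_zero, Real.exp_zero]
          ring
      _ ≤ M / c * (Real.exp (c * |t|) - 1) := by
          rw [habs]
          rw [div_mul_eq_mul_div, mul_div_assoc]
          have : (Real.exp (c * (-t)) - 1) / c - (-t) ≤ (Real.exp (c * (-t)) - 1) / c := by
            linarith
          nlinarith [mul_le_mul_of_nonneg_left this hM]

lemma integral_Ioi_mul_exp {c : ℝ} (hc : 0 < c) (T : ℝ) :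
    ∫ x in Set.Ioi T, x * Real.exp (-(c * x^2)) = Real.exp (-(c * T^2)) / (2*c) := by
  have hder : ∀ x ∈ Set.Ici T, HasDerivAt (fun y => -(2*c)⁻¹ * Real.exp (-(c*y^2)))
      (x * Real.exp (-(c*x^2))) x := by
    intro x _
    have h1 : HasDerivAt (fun y : ℝ => -(c*y^2)) (-(c*(2*x))) x := by
      simpa using ((hasDerivAt_pow 2 x).const_mul c).fun_neg
    have h2 := (h1.exp).const_mul (-(2*c)⁻¹)
    refine h2.congr_deriv ?_
    field_simp
  have hint : IntegrableOn (fun x => x * Real.exp (-(c*x^2))) (Set.Ioi T) := by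
    have := integrable_mul_exp_neg_mul_sq hc
    simp only [neg_mul] at this ⊢
    exact this.integrableOn
  have hlim : Filter.Tendsto (fun y => -(2*c)⁻¹ * Real.exp (-(c*y^2)))
      Filter.atTop (nhds 0) := by
    have h3 : Filter.Tendsto (fun y : ℝ => -(c*y^2)) Filter.atTop Filter.atBot :=
      Filter.tendsto_neg_atTop_atBot.comp
        ((Filter.tendsto_pow_atTop two_ne_zero).const_mul_atTop hc)
    have := (Real.tendsto_exp_atBot.comp h3).const_mul (-(2*c)⁻¹)
    simpa using this
  have h := integral_Ioi_of_hasDerivAt_of_tendsto' hder hint hlim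
  rw [h]
  field_simp
  ring

theorem stmt1 {V : Type*} [NormedAddCommGroup V] [InnerProductSpace ℂ V]
    [FiniteDimensional ℂ V]
    (H A B : V →L[ℂ] V) (hH : IsSelfAdjoint H) (β : ℝ) (hβ : 0 < β)
    (b v K d : ℝ) (hb : 0 < b) (hv : 0 < v) (hK : 0 ≤ K) (hd : 0 ≤ d)
    (hLR : ∀ s : ℝ, ‖heis H s A * B - B * heis H s A‖ ≤
      K * (Real.exp (b * v * |s|) - 1) * Real.exp (-(b * d)))
    (T : ℝ) (hT : 0 < T) :
    ‖aiL H β A * B - B * aiL H β A‖ ≤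
      2 * β * K / (Real.sqrt π * b ^ 2 * v ^ 2) * Real.exp (b * (v * T - d))
      + 2 / (Real.sqrt π * β) * ‖A‖ * ‖B‖ * Real.exp (-(β ^ 2 * T ^ 2)) := by
  have hπ : 0 < Real.sqrt π := Real.sqrt_pos.mpr Real.pi_pos
  have hβ2 : (0:ℝ) < β^2 := by positivity
  have hbv : 0 < b * v := mul_pos hb hv
  -- basic continuity
  have hcont_heis : Continuous fun s : ℝ => heis H s A := continuous_heis H A
  have hint_heis : ∀ x y : ℝ, IntervalIntegrable (fun s => heis H s A) volume x y :=
    fun x y => hcont_heis.intervalIntegrable x y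
  set J : ℝ → (V →L[ℂ] V) := (fun t => ∫ s in (0:ℝ)..t, heis H s A) with hJ
  have hJcont : Continuous J := intervalIntegral.continuous_primitive hint_heis 0
  have hJnorm : ∀ t, ‖J t‖ ≤ ‖A‖ * |t| := by
    intro t
    have := intervalIntegral.norm_integral_le_of_norm_le_const
      (a := (0:ℝ)) (b := t) (C := ‖A‖) (f := fun s => heis H s A)
      (fun s _ => norm_heis_le H hH s A)
    simpa using this
  set comm : ℝ → (V →L[ℂ] V) := (fun t => J t * B - B * J t) with hcomm
  have hcomm_cont : Continuous comm :=
    (hJcont.mul continuous_const).sub (continuous_const.mul hJcont)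
  have hcomm_eq : ∀ t, comm t =
      ∫ s in (0:ℝ)..t, (heis H s A * B - B * heis H s A) := by
    intro t
    have e1 := ((ContinuousLinearMap.mul ℂ (V →L[ℂ] V)).flip B).intervalIntegral_comp_comm
      (hint_heis 0 t)
    have e2 := (ContinuousLinearMap.mul ℂ (V →L[ℂ] V) B).intervalIntegral_comp_comm
      (hint_heis 0 t)
    simp only [ContinuousLinearMap.flip_apply, ContinuousLinearMap.mul_apply'] at e1 e2
    rw [hcomm]
    dsimp only
    rw [← e1, ← e2, ← intervalIntegral.integral_sub (f := fun s => heis H s A * B) (g := fun s => B * heis H s A)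
      ((hcont_heis.mul continuous_const).intervalIntegrable _ _)
      ((continuous_const.mul hcont_heis).intervalIntegrable _ _)]
  have hcomm_norm1 : ∀ t, ‖comm t‖ ≤ 2 * ‖A‖ * ‖B‖ * |t| := by
    intro t
    calc ‖comm t‖ ≤ ‖J t * B‖ + ‖B * J t‖ := norm_sub_le _ _
      _ ≤ ‖J t‖ * ‖B‖ + ‖B‖ * ‖J t‖ := add_le_add (norm_mul_le _ _) (norm_mul_le _ _)
      _ = 2 * ‖J t‖ * ‖B‖ := by ring
      _ ≤ 2 * (‖A‖ * |t|) * ‖B‖ := by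
          gcongr
          exact hJnorm t
      _ = 2 * ‖A‖ * ‖B‖ * |t| := by ring
  set M : ℝ := K * Real.exp (-(b*d)) with hM
  have hM0 : 0 ≤ M := mul_nonneg hK (Real.exp_pos _).le
  have hcomm_norm2 : ∀ t, ‖comm t‖ ≤ M / (b*v) * (Real.exp (b*v*|t|) - 1) := by
    intro t
    rw [hcomm_eq t]
    refine key_bound ((hcont_heis.mul continuous_const).sub
      (continuous_const.mul hcont_heis)) hbv hM0 (fun s => ?_) t
    calc ‖heis H s A * B - B * heis H s A‖
        ≤ K * (Real.exp (b * v * |s|) - 1) * Real.exp (-(b * d)) := hLR s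
      _ = M * (Real.exp (b*v*|s|) - 1) := by rw [hM]; ring
  -- the filtered commutator
  set G : ℝ → (V →L[ℂ] V) := (fun t => phi β t • comm t) with hG
  have hphi_cont : Continuous (phi β) := by
    unfold phi; fun_prop
  have hphi_nonneg : ∀ t, 0 ≤ phi β t := by
    intro t; unfold phi; positivity
  have hphi_le : ∀ t, phi β t ≤ β / Real.sqrt π := by
    intro t
    unfold phi
    have h1 : Real.exp (-(β^2 * t^2)) ≤ 1 := Real.exp_le_one_iff.mpr (neg_nonpos.mpr (by positivity))
    have h2 : (0:ℝ) ≤ β / Real.sqrt π := by positivity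
    nlinarith
  have hGnorm : ∀ t, ‖G t‖ = phi β t * ‖comm t‖ := by
    intro t
    rw [hG]
    dsimp only
    rw [norm_smul (phi β t) (comm t), Real.norm_eq_abs, abs_of_nonneg (hphi_nonneg t)]
  have hGcont : Continuous G := hphi_cont.smul hcomm_cont
  set c2 : ℝ := β / Real.sqrt π * (2 * ‖A‖ * ‖B‖) with hc2
  have hc20 : 0 ≤ c2 := by positivity
  set g2 : ℝ → ℝ := (fun t => c2 * |t * Real.exp (-(β^2 * t^2))|) with hg2
  have hg2int : Integrable g2 := by
    rw [hg2]
    have := (integrable_mul_exp_neg_mul_sq hβ2).abs.const_mul c2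
    simpa [neg_mul] using this
  have hGle : ∀ t, ‖G t‖ ≤ g2 t := by
    intro t
    rw [hGnorm, hg2]
    dsimp only
    rw [abs_mul, abs_of_pos (Real.exp_pos _)]
    have h1 : phi β t * ‖comm t‖ ≤
        (β / Real.sqrt π * Real.exp (-(β^2 * t^2))) * (2 * ‖A‖ * ‖B‖ * |t|) := by
      unfold phi
      exact mul_le_mul le_rfl (hcomm_norm1 t) (norm_nonneg _) (by positivity)
    calc phi β t * ‖comm t‖ ≤ _ := h1
      _ = c2 * (|t| * Real.exp (-(β^2 * t^2))) := by rw [hc2]; ring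
  have hGint : Integrable G :=
    hg2int.mono' hGcont.aestronglyMeasurable (Filter.Eventually.of_forall hGle)
  -- rewrite the commutator of aiL as an integral
  set F : ℝ → (V →L[ℂ] V) := (fun t => phi β t • J t) with hF
  have hFcont : Continuous F := hphi_cont.smul hJcont
  have hFint : Integrable F := by
    have hdom : Integrable (fun t => (β / Real.sqrt π * ‖A‖) *
        |t * Real.exp (-(β^2 * t^2))|) := by
      have := (integrable_mul_exp_neg_mul_sq hβ2).abs.const_mul (β / Real.sqrt π * ‖A‖)
      simpa [neg_mul] using this
    refine hdom.mono' hFcont.aestronglyMeasurable (Filter.Eventually.of_forall fun t => ?_)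
    rw [hF]
    dsimp only
    rw [norm_smul (phi β t) (J t), Real.norm_eq_abs, abs_of_nonneg (hphi_nonneg t), abs_mul,
      abs_of_pos (Real.exp_pos _)]
    calc phi β t * ‖J t‖ ≤ (β / Real.sqrt π * Real.exp (-(β^2 * t^2))) * (‖A‖ * |t|) := by
          unfold phi
          exact mul_le_mul le_rfl (hJnorm t) (norm_nonneg _) (by positivity)
      _ = β / Real.sqrt π * ‖A‖ * (|t| * Real.exp (-(β^2 * t^2))) := by ring
  have hmain : aiL H β A * B - B * aiL H β A = ∫ t, G t := by
    have haiL : aiL H β A = ∫ t, F t := rfl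
    have e1 := ((ContinuousLinearMap.mul ℂ (V →L[ℂ] V)).flip B).integral_comp_comm hFint
    have e2 := (ContinuousLinearMap.mul ℂ (V →L[ℂ] V) B).integral_comp_comm hFint
    simp only [ContinuousLinearMap.flip_apply, ContinuousLinearMap.mul_apply'] at e1 e2
    have hFB : Integrable (fun t => F t * B) volume := hFint.mul_const B
    have hBF : Integrable (fun t => B * F t) volume := hFint.const_mul B
    have heq : ∀ t : ℝ, G t = F t * B - B * F t := by
      intro t
      rw [hG, hF, hcomm]
      dsimp only
      rw [smul_sub, smul_mul_assoc, mul_smul_comm]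
    calc aiL H β A * B - B * aiL H β A
        = (∫ t, F t * B) - ∫ t, B * F t := by rw [haiL, e1, e2]
      _ = ∫ t, (F t * B - B * F t) := (integral_sub hFB hBF).symm
      _ = ∫ t, G t := by simp_rw [heq]
  rw [hmain]
  -- split the integral
  have hsplit : ∫ t, ‖G t‖ =
      (∫ t in Set.Icc (-T) T, ‖G t‖) + ∫ t in (Set.Icc (-T) T)ᶜ, ‖G t‖ :=
    (integral_add_compl measurableSet_Icc hGint.norm).symm
  -- the inside piece
  set g1 : ℝ → ℝ := (fun t => β / Real.sqrt π * (M / (b*v) * (Real.exp (b*v*|t|) - 1)))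
    with hg1
  have hg1cont : Continuous g1 := by
    rw [hg1]
    fun_prop
  have hGle1 : ∀ t, ‖G t‖ ≤ g1 t := by
    intro t
    rw [hGnorm, hg1]
    dsimp only
    refine mul_le_mul (hphi_le t) (hcomm_norm2 t) (norm_nonneg _) (by positivity)
  have hpart1 : ∫ t in Set.Icc (-T) T, ‖G t‖ ≤
      2 * β * K / (Real.sqrt π * b ^ 2 * v ^ 2) * Real.exp (b * (v * T - d)) := by
    have step1 : ∫ t in Set.Icc (-T) T, ‖G t‖ ≤ ∫ t in Set.Icc (-T) T, g1 t :=
      setIntegral_mono_on (hGint.norm.integrableOn) (hg1cont.integrableOn_Icc)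
        measurableSet_Icc (fun t _ => hGle1 t)
    have e_icc : ∫ t in Set.Icc (-T) T, g1 t = ∫ t in (-T)..T, g1 t := by
      rw [integral_Icc_eq_integral_Ioc, ← intervalIntegral.integral_of_le (by linarith)]
    have esplit : ∫ t in (-T)..T, g1 t =
        (∫ t in (-T)..(0:ℝ), g1 t) + ∫ t in (0:ℝ)..T, g1 t :=
      (intervalIntegral.integral_add_adjacent_intervals
        (hg1cont.intervalIntegrable _ _) (hg1cont.intervalIntegrable _ _)).symm
    have eneg : ∫ t in (-T)..(0:ℝ), g1 t = ∫ t in (0:ℝ)..T, g1 t := by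
      have hcn := intervalIntegral.integral_comp_neg (a := (0:ℝ)) (b := T) g1
      have hgeven : ∀ x : ℝ, g1 (-x) = g1 x := by
        intro x; rw [hg1]; dsimp only; rw [abs_neg]
      simp_rw [hgeven] at hcn
      simp only [neg_zero] at hcn
      exact hcn.symm
    have ezero : ∫ t in (0:ℝ)..T, g1 t =
        β / Real.sqrt π * (M / (b*v)) * ((Real.exp (b*v*T) - 1) / (b*v) - T) := by
      have hcongr : Set.EqOn g1
          (fun t => (β / Real.sqrt π * (M / (b*v))) * (Real.exp (b*v*t) - 1))
          (Set.uIcc (0:ℝ) T) := by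
        intro t ht
        rw [Set.uIcc_of_le hT.le] at ht
        rw [hg1]
        dsimp only
        rw [abs_of_nonneg ht.1]
        ring
      rw [intervalIntegral.integral_congr hcongr, intervalIntegral.integral_const_mul,
        integral_exp_sub_one hbv.ne']
      simp only [mul_zero, Real.exp_zero]
      ring
    have hnum : 2 * (β / Real.sqrt π * (M / (b*v)) * ((Real.exp (b*v*T) - 1) / (b*v) - T)) ≤
        2 * β * K / (Real.sqrt π * b ^ 2 * v ^ 2) * Real.exp (b * (v * T - d)) := by
      have h1 : (Real.exp (b*v*T) - 1) / (b*v) - T ≤ Real.exp (b*v*T) / (b*v) := by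
        have : (Real.exp (b*v*T) - 1) / (b*v) ≤ Real.exp (b*v*T) / (b*v) := by
          gcongr
          linarith
        linarith
      have hc0 : 0 ≤ 2 * (β / Real.sqrt π * (M / (b*v))) := by positivity
      have h2 : 2 * (β / Real.sqrt π * (M / (b*v)) * ((Real.exp (b*v*T) - 1) / (b*v) - T)) ≤
          2 * (β / Real.sqrt π * (M / (b*v)) * (Real.exp (b*v*T) / (b*v))) := by
        nlinarith [mul_le_mul_of_nonneg_left h1 hc0]
      refine h2.trans (le_of_eq ?_)
      rw [hM, show b * (v * T - d) = b*v*T - b*d by ring, Real.exp_sub, Real.exp_neg]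
      have he : Real.exp (b*d) ≠ 0 := (Real.exp_pos _).ne'
      field_simp
    calc ∫ t in Set.Icc (-T) T, ‖G t‖ ≤ ∫ t in Set.Icc (-T) T, g1 t := step1
      _ = 2 * (β / Real.sqrt π * (M / (b*v)) * ((Real.exp (b*v*T) - 1) / (b*v) - T)) := by
          rw [e_icc, esplit, eneg, ezero]; ring
      _ ≤ _ := hnum
  -- the outside piece
  have hpart2 : ∫ t in (Set.Icc (-T) T)ᶜ, ‖G t‖ ≤
      2 / (Real.sqrt π * β) * ‖A‖ * ‖B‖ * Real.exp (-(β ^ 2 * T ^ 2)) := by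
    have step1 : ∫ t in (Set.Icc (-T) T)ᶜ, ‖G t‖ ≤ ∫ t in (Set.Icc (-T) T)ᶜ, g2 t :=
      setIntegral_mono_on (hGint.norm.integrableOn) (hg2int.integrableOn)
        measurableSet_Icc.compl (fun t _ => hGle t)
    have hIoi : ∫ t in Set.Ioi T, g2 t = c2 * (Real.exp (-(β^2 * T^2)) / (2 * β^2)) := by
      have hcongr : Set.EqOn g2 (fun t => c2 * (t * Real.exp (-(β^2 * t^2)))) (Set.Ioi T) := by
        intro t ht
        rw [hg2]
        dsimp only
        rw [abs_of_nonneg (mul_nonneg (le_of_lt (lt_trans hT ht)) (Real.exp_pos _).le)]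
      rw [setIntegral_congr_fun measurableSet_Ioi hcongr]
      rw [integral_const_mul, integral_Ioi_mul_exp hβ2]
    have hIio : ∫ t in Set.Iio (-T), g2 t = ∫ t in Set.Ioi T, g2 t := by
      have hcn := integral_comp_neg_Ioi T g2
      have hgeven : ∀ x : ℝ, g2 (-x) = g2 x := by
        intro x
        rw [hg2]
        dsimp only
        rw [neg_sq, neg_mul, abs_neg]
      simp_rw [hgeven] at hcn
      rw [← integral_Iic_eq_integral_Iio, ← hcn]
    have hdisj : Disjoint (Set.Iio (-T)) (Set.Ioi T) := by
      rw [Set.disjoint_left]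
      intro x h1 h2
      simp only [Set.mem_Iio, Set.mem_Ioi] at h1 h2
      linarith
    have hunion : ∫ t in (Set.Icc (-T) T)ᶜ, g2 t =
        (∫ t in Set.Iio (-T), g2 t) + ∫ t in Set.Ioi T, g2 t := by
      have hcompl : (Set.Icc (-T) T)ᶜ = Set.Iio (-T) ∪ Set.Ioi T := by
        ext x
        simp only [Set.mem_compl_iff, Set.mem_Icc, Set.mem_union, Set.mem_Iio, Set.mem_Ioi,
          not_and_or, not_le]
      rw [hcompl]
      exact setIntegral_union hdisj measurableSet_Ioi hg2int.integrableOn hg2int.integrableOn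
    have : ∫ t in (Set.Icc (-T) T)ᶜ, g2 t =
        2 / (Real.sqrt π * β) * ‖A‖ * ‖B‖ * Real.exp (-(β ^ 2 * T ^ 2)) := by
      rw [hunion, hIio, hIoi, hc2]
      have hβ0 : β ≠ 0 := hβ.ne'
      field_simp
      ring
    linarith [step1, this.le]
  calc ‖∫ t, G t‖ ≤ ∫ t, ‖G t‖ := norm_integral_le_integral_norm _
    _ = _ := hsplit
    _ ≤ _ := add_le_add hpart1 hpart2
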